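/- Let a ≠ 0 and f₁, f₂ : ℝ → ℝ be twice differentiable, non-constant, with f₁'', f₂'' nowhere zero, f₁, f₂, f₁', f₂' nowhere zero, and af₁'f₂ + f₁f₂' nowhere zero. Then (f₁'f₂)²f₁f₂'' − 2(f₁'f₂')²f₁f₂ + (f₁f₂')²f₂f₁'' + f₁f₂'' + 2af₁'f₂' + a²f₁''f₂ = 0 cannot hold identically; i.e., there is no minimal affine factorable surface of type 2 in I³ other than non-isotropic planes. -/

import Mathlib

noncomputable def wyy (w : ℝ → ℝ → ℝ) (y z : ℝ) : ℝ :=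
  deriv (fun t => deriv (fun t' => w t' z) t) y

noncomputable def wzz (w : ℝ → ℝ → ℝ) (y z : ℝ) : ℝ :=
  deriv (fun s => deriv (fun s' => w y s') s) z

noncomputable def wyz (w : ℝ → ℝ → ℝ) (y z : ℝ) : ℝ :=
  deriv (fun s => deriv (fun t => w t s) y) z

noncomputable def wy (w : ℝ → ℝ → ℝ) (y z : ℝ) : ℝ := deriv (fun t => w t z) y

noncomputable def wz (w : ℝ → ℝ → ℝ) (y z : ℝ) : ℝ := deriv (fun s => w y s) z

/-- Isotropic Gaussian curvature of the graph x = w(y,z). -/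
noncomputable def K2 (w : ℝ → ℝ → ℝ) (y z : ℝ) : ℝ :=
  (wyy w y z * wzz w y z - (wyz w y z)^2) / (wz w y z)^4

/-- Isotropic mean curvature of the graph x = w(y,z). -/
noncomputable def H2 (w : ℝ → ℝ → ℝ) (y z : ℝ) : ℝ :=
  ((wz w y z)^2 * wyy w y z - 2 * wy w y z * wz w y z * wyz w y z
    + (1 + (wy w y z)^2) * wzz w y z) / (2 * (wz w y z)^3)

noncomputable def D2 (f : ℝ → ℝ) : ℝ → ℝ := deriv (deriv f)

open Set

private lemma inj_of_deriv_ne_zero {g : ℝ → ℝ} (hg : ∀ x, DifferentiableAt ℝ g x)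
    (hg' : ∀ x, deriv g x ≠ 0) : Function.Injective g := by
  intro x y hxy
  by_contra hne
  rcases lt_or_gt_of_ne hne with h | h
  · obtain ⟨c, _, hc⟩ := exists_deriv_eq_zero h
      (fun t _ => (hg t).continuousAt.continuousWithinAt) hxy
    exact hg' c hc
  · obtain ⟨c, _, hc⟩ := exists_deriv_eq_zero h
      (fun t _ => (hg t).continuousAt.continuousWithinAt) hxy.symm
    exact hg' c hc

private lemma quad_zero {c₂ c₁ c₀ x y z : ℝ} (hxy : x ≠ y) (hxz : x ≠ z) (hyz : y ≠ z)
    (hx : c₂*x^2 + c₁*x + c₀ = 0) (hy : c₂*y^2 + c₁*y + c₀ = 0)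
    (hz : c₂*z^2 + c₁*z + c₀ = 0) : c₂ = 0 ∧ c₁ = 0 ∧ c₀ = 0 := by
  have e1 : (x - y) * (c₂*(x+y) + c₁) = 0 := by linear_combination hx - hy
  have e2 : (x - z) * (c₂*(x+z) + c₁) = 0 := by linear_combination hx - hz
  have f1 : c₂*(x+y) + c₁ = 0 :=
    (mul_eq_zero.1 e1).resolve_left (sub_ne_zero.2 hxy)
  have f2 : c₂*(x+z) + c₁ = 0 :=
    (mul_eq_zero.1 e2).resolve_left (sub_ne_zero.2 hxz)
  have g1 : c₂ * (y - z) = 0 := by linear_combination f1 - f2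
  have h2 : c₂ = 0 := (mul_eq_zero.1 g1).resolve_right (sub_ne_zero.2 hyz)
  have h1 : c₁ = 0 := by linear_combination f1 - (x+y) * h2
  exact ⟨h2, h1, by linear_combination hx - x^2 * h2 - x * h1⟩

private lemma exists_zero_of_deriv_const {g : ℝ → ℝ} {m : ℝ} (hm : m ≠ 0)
    (hg : ∀ x, DifferentiableAt ℝ g x) (hg' : ∀ x, deriv g x = m) : ∃ x, g x = 0 := by
  have hh : Differentiable ℝ (fun x => g x - m * x) :=
    fun x => (hg x).sub ((differentiableAt_id.const_mul m))
  have hd : ∀ x, deriv (fun x => g x - m * x) x = 0 := by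
    intro x
    have h1 : HasDerivAt (fun x => g x - m * x) (deriv g x - m * 1) x :=
      ((hg x).hasDerivAt).sub ((hasDerivAt_id x).const_mul m)
    rw [h1.deriv, hg' x]; ring
  have hc := is_const_of_deriv_eq_zero hh hd
  refine ⟨-(g 0)/m, ?_⟩
  have := hc (-(g 0)/m) 0
  field_simp at this
  have h0 : g (-(g 0)/m) * m = 0 := by rw [neg_div]; linear_combination m * this
  exact (mul_eq_zero.1 h0).resolve_right hm

private lemma exists_mid {g : ℝ → ℝ} (hg : Continuous g) (x y : ℝ) :
    ∃ z, g z = (g x + g y)/2 := by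
  rcases le_total x y with h | h
  · rcases le_total (g x) (g y) with h' | h'
    · obtain ⟨z, _, hz⟩ := intermediate_value_Icc h hg.continuousOn
        (⟨by linarith, by linarith⟩ : (g x + g y)/2 ∈ Icc (g x) (g y))
      exact ⟨z, hz⟩
    · obtain ⟨z, _, hz⟩ := intermediate_value_Icc' h hg.continuousOn
        (⟨by linarith, by linarith⟩ : (g x + g y)/2 ∈ Icc (g y) (g x))
      exact ⟨z, hz⟩
  · rcases le_total (g y) (g x) with h' | h'
    · obtain ⟨z, _, hz⟩ := intermediate_value_Icc h hg.continuousOn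
        (⟨by linarith, by linarith⟩ : (g x + g y)/2 ∈ Icc (g y) (g x))
      exact ⟨z, hz⟩
    · obtain ⟨z, _, hz⟩ := intermediate_value_Icc' h hg.continuousOn
        (⟨by linarith, by linarith⟩ : (g x + g y)/2 ∈ Icc (g x) (g y))
      exact ⟨z, hz⟩


theorem stmt16 (a : ℝ) (f₁ f₂ : ℝ → ℝ)
    (hf₁ : ∀ t, DifferentiableAt ℝ f₁ t) (hf₁' : ∀ t, DifferentiableAt ℝ (deriv f₁) t)
    (hf₂ : ∀ t, DifferentiableAt ℝ f₂ t) (hf₂' : ∀ t, DifferentiableAt ℝ (deriv f₂) t)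
    (ha : a ≠ 0)
    (h₁nc : ∃ s t, f₁ s ≠ f₁ t) (h₂nc : ∃ s t, f₂ s ≠ f₂ t)
    (h₁'' : ∀ t, D2 f₁ t ≠ 0) (h₂'' : ∀ t, D2 f₂ t ≠ 0)
    (h₁0 : ∀ t, f₁ t ≠ 0) (h₂0 : ∀ t, f₂ t ≠ 0)
    (h₁'0 : ∀ t, deriv f₁ t ≠ 0) (h₂'0 : ∀ t, deriv f₂ t ≠ 0)
    (hreg : ∀ u₁ u₂ : ℝ, a * deriv f₁ u₁ * f₂ u₂ + f₁ u₁ * deriv f₂ u₂ ≠ 0)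
    (hmin : ∀ u₁ u₂ : ℝ,
      (deriv f₁ u₁ * f₂ u₂)^2 * f₁ u₁ * D2 f₂ u₂
        - 2 * (deriv f₁ u₁ * deriv f₂ u₂)^2 * f₁ u₁ * f₂ u₂
        + (f₁ u₁ * deriv f₂ u₂)^2 * f₂ u₂ * D2 f₁ u₁
        + f₁ u₁ * D2 f₂ u₂ + 2 * a * deriv f₁ u₁ * deriv f₂ u₂
        + a^2 * D2 f₁ u₁ * f₂ u₂ = 0) :
    False := by
  simp only [D2] at hmin h₁'' h₂''
  set B := deriv f₁ with hBdef
  set E := deriv f₂ with hEdef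
  set C := deriv B with hCdef
  set K := deriv E with hKdef
  -- basic HasDerivAt facts
  have hA' : ∀ u, HasDerivAt f₁ (B u) u := fun u => (hf₁ u).hasDerivAt
  have hB' : ∀ u, HasDerivAt B (C u) u := fun u => (hf₁' u).hasDerivAt
  have hD' : ∀ v, HasDerivAt f₂ (E v) v := fun v => (hf₂ v).hasDerivAt
  have hE' : ∀ v, HasDerivAt E (K v) v := fun v => (hf₂' v).hasDerivAt
  -- the master identity
  have hE1 : ∀ u v,
      a^2 * (C u / f₁ u) + 2*a*(B u / f₁ u)*(E v / f₂ v) + (E v / f₂ v)^2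
      = (B u)^2 * ((E v)^2 - f₂ v * K v)
        + ((B u)^2 - f₁ u * C u) * (E v)^2
        + ((E v)^2 - f₂ v * K v)/(f₂ v)^2 := by
    intro u v
    have h := hmin u v
    have hA := h₁0 u
    have hD := h₂0 v
    field_simp [hA, hD]
    linear_combination f₂ v * h
  -- derivative facts for squares and quotients
  have hφd : ∀ u, HasDerivAt (fun u => (B u)^2) (2*B u*C u) u := by
    intro u
    have : HasDerivAt (fun u => (B u)^2) _ u := (hB' u).pow 2
    convert this using 1
    push_cast
    ring
  have hψd : ∀ v, HasDerivAt (fun v => (E v)^2) (2*E v*K v) v := by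
    intro v
    have : HasDerivAt (fun v => (E v)^2) _ v := (hE' v).pow 2
    convert this using 1
    push_cast
    ring
  have hA2d : ∀ u, HasDerivAt (fun u => (f₁ u)^2) (2*f₁ u*B u) u := by
    intro u
    have : HasDerivAt (fun u => (f₁ u)^2) _ u := (hA' u).pow 2
    convert this using 1
    push_cast
    ring
  have hD2d : ∀ v, HasDerivAt (fun v => (f₂ v)^2) (2*f₂ v*E v) v := by
    intro v
    have : HasDerivAt (fun v => (f₂ v)^2) _ v := (hD' v).pow 2
    convert this using 1
    push_cast
    ring
  have hPd : ∀ u, HasDerivAt (fun u => B u / f₁ u)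
      ((C u * f₁ u - B u * B u)/(f₁ u)^2) u :=
    fun u => (hB' u).div (hA' u) (h₁0 u)
  have hQd : ∀ v, HasDerivAt (fun v => E v / f₂ v)
      ((K v * f₂ v - E v * E v)/(f₂ v)^2) v :=
    fun v => (hE' v).div (hD' v) (h₂0 v)
  -- injectivity of B² and E²
  have hφinj : Function.Injective (fun u => (B u)^2) := by
    apply inj_of_deriv_ne_zero (fun x => (hφd x).differentiableAt)
    intro x
    rw [(hφd x).deriv]
    exact mul_ne_zero (mul_ne_zero two_ne_zero (h₁'0 x)) (h₁'' x)
  have hψinj : Function.Injective (fun v => (E v)^2) := by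
    apply inj_of_deriv_ne_zero (fun x => (hψd x).differentiableAt)
    intro x
    rw [(hψd x).deriv]
    exact mul_ne_zero (mul_ne_zero two_ne_zero (h₂'0 x)) (h₂'' x)
  have hφne : ∀ x y : ℝ, x ≠ y → (B x)^2 ≠ (B y)^2 :=
    fun x y hxy h => hxy (hφinj h)
  have hψne : ∀ x y : ℝ, x ≠ y → (E x)^2 ≠ (E y)^2 :=
    fun x y hxy h => hxy (hψinj h)
  -- Case: B/f₁ constant leads to contradiction
  have caseP : ¬ (∀ u u', B u / f₁ u = B u' / f₁ u') := by
    intro hconst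
    set c := B 0 / f₁ 0 with hcdef
    clear_value c
    have hBA : ∀ u, B u = c * f₁ u := by
      intro u
      have h := hconst u 0
      rw [div_eq_div_iff (h₁0 u) (h₁0 0)] at h
      rw [hcdef, div_mul_eq_mul_div, eq_div_iff (h₁0 0)]
      linear_combination h
    have hCA : ∀ u, C u * f₁ u = B u * B u := by
      intro u
      have hPfun : (fun u => B u / f₁ u) = fun _ => c := funext (fun u => (hconst u 0).trans hcdef.symm)
      have hder := (hPd u).deriv
      rw [hPfun, deriv_const] at hder
      have h9 := (div_eq_zero_iff.1 hder.symm).resolve_right (pow_ne_zero 2 (h₁0 u))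
      linarith [h9]
    have hsA : ∀ u, C u / f₁ u = c^2 := by
      intro u
      rw [div_eq_iff (h₁0 u)]
      have h3 : C u * f₁ u = (c^2*f₁ u)*f₁ u := by
        linear_combination hCA u + (B u + c*f₁ u)*(hBA u)
      exact mul_right_cancel₀ (h₁0 u) h3
    have hpA : ∀ u, B u / f₁ u = c := fun u => (hconst u 0).trans hcdef.symm
    have hU0 : ∀ u, (B u)^2 - f₁ u * C u = 0 := by
      intro u
      linear_combination - hCA u
    have hV0 : ∀ v, (E v)^2 - f₂ v * K v = 0 := by
      intro v
      have e0 := hE1 0 v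
      have e1 := hE1 1 v
      rw [hsA 0, hpA 0] at e0
      rw [hsA 1, hpA 1] at e1
      have key : ((B 0)^2 - (B 1)^2) * ((E v)^2 - f₂ v * K v) = 0 := by
        linear_combination e1 - e0 - (E v)^2 * hU0 0 + (E v)^2 * hU0 1
      exact (mul_eq_zero.1 key).resolve_left (sub_ne_zero.2 (hφne 0 1 (by norm_num)))
    have e0 := hE1 0 0
    rw [hsA 0, hpA 0, hV0 0] at e0
    have hz : (a*c + E 0/f₂ 0)^2 = 0 := by
      linear_combination e0 + (E 0)^2 * hU0 0
    have hz2 : a*c + E 0/f₂ 0 = 0 := by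
      have := sq_eq_zero_iff.1 hz
      exact this
    apply hreg 0 0
    have hD := h₂0 0
    field_simp at hz2
    linear_combination f₁ 0 * hz2 + a * f₂ 0 * hBA 0
  -- Case: E/f₂ constant leads to contradiction
  have caseQ : ¬ (∀ v v', E v / f₂ v = E v' / f₂ v') := by
    intro hconst
    have hV0 : ∀ v, (E v)^2 - f₂ v * K v = 0 := by
      intro v
      have hQfun : (fun v => E v / f₂ v) = fun _ => E 0 / f₂ 0 :=
        funext (fun v => hconst v 0)
      have hder := (hQd v).deriv
      rw [hQfun, deriv_const] at hder
      have h9 := (div_eq_zero_iff.1 hder.symm).resolve_right (pow_ne_zero 2 (h₂0 v))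
      linarith [h9]
    have hq01 : E 0/f₂ 0 = E 1/f₂ 1 := hconst 0 1
    have hUu : ∀ u, (B u)^2 - f₁ u * C u = 0 := by
      intro u
      have e0 := hE1 u 0
      have e1 := hE1 u 1
      have key : ((B u)^2 - f₁ u * C u) * ((E 0)^2 - (E 1)^2) = 0 := by
        linear_combination e1 - e0
          + (2*a*(B u/f₁ u) + E 0/f₂ 0 + E 1/f₂ 1) * hq01
          - ((B u)^2 + 1/(f₂ 0)^2) * hV0 0 + ((B u)^2 + 1/(f₂ 1)^2) * hV0 1
      exact (mul_eq_zero.1 key).resolve_right (sub_ne_zero.2 (hψne 0 1 (by norm_num)))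
    apply caseP
    apply is_const_of_deriv_eq_zero
    · exact fun u => ((hf₁' u).div (hf₁ u) (h₁0 u))
    · intro u
      rw [(hPd u).deriv, div_eq_zero_iff]
      left
      linear_combination - hUu u
  -- main case split
  by_cases hpc : ∀ u u', B u / f₁ u = B u' / f₁ u'
  · exact caseP hpc
  by_cases hqc : ∀ v v', E v / f₂ v = E v' / f₂ v'
  · exact caseQ hqc
  push_neg at hqc
  obtain ⟨b₁, b₂, hbne⟩ := hqc
  -- the bilinear difference identity
  have hRR : ∀ u u' v v',
      ((B u)^2 - (B u')^2) * (((E v)^2 - f₂ v*K v) - ((E v')^2 - f₂ v'*K v'))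
      + (((B u)^2 - f₁ u*C u) - ((B u')^2 - f₁ u'*C u')) * ((E v)^2 - (E v')^2)
      = 2*a*(B u/f₁ u - B u'/f₁ u') * (E v/f₂ v - E v'/f₂ v') := by
    intro u u' v v'
    have e1 := hE1 u v
    have e2 := hE1 u' v
    have e3 := hE1 u v'
    have e4 := hE1 u' v'
    linear_combination e2 - e1 + e3 - e4
  by_cases hdep : ∀ v₁ v₂ v₃ v₄ : ℝ,
      (((E v₁)^2 - (E v₂)^2) * (E v₃/f₂ v₃ - E v₄/f₂ v₄)
        = (E v₁/f₂ v₁ - E v₂/f₂ v₂) * ((E v₃)^2 - (E v₄)^2))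
    ∧ ((E v₁/f₂ v₁ - E v₂/f₂ v₂) * (((E v₃)^2 - f₂ v₃*K v₃) - ((E v₄)^2 - f₂ v₄*K v₄))
        = (((E v₁)^2 - f₂ v₁*K v₁) - ((E v₂)^2 - f₂ v₂*K v₂)) * (E v₃/f₂ v₃ - E v₄/f₂ v₄))
    ∧ ((((E v₁)^2 - f₂ v₁*K v₁) - ((E v₂)^2 - f₂ v₂*K v₂)) * ((E v₃)^2 - (E v₄)^2)
        = ((E v₁)^2 - (E v₂)^2) * (((E v₃)^2 - f₂ v₃*K v₃) - ((E v₄)^2 - f₂ v₄*K v₄)))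
  · -- Branch 1 : all v-side difference vectors are parallel
    have hdq : E b₁/f₂ b₁ - E b₂/f₂ b₂ ≠ 0 := sub_ne_zero.2 hbne
    set h : ℝ := ((E b₁)^2 - (E b₂)^2)/(E b₁/f₂ b₁ - E b₂/f₂ b₂) with hhdef
    set h₀ : ℝ := (E b₂)^2 - h * (E b₂/f₂ b₂) with hh0def
    set e : ℝ := (((E b₁)^2 - f₂ b₁*K b₁) - ((E b₂)^2 - f₂ b₂*K b₂))/(E b₁/f₂ b₁ - E b₂/f₂ b₂) with hedef
    set τ' : ℝ := ((E b₂)^2 - f₂ b₂*K b₂) - e * (E b₂/f₂ b₂) with htdef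
    clear_value h h₀ e τ'
    have hψq : ∀ v, (E v)^2 = h * (E v/f₂ v) + h₀ := by
      intro v
      have hc := (hdep v b₂ b₁ b₂).1
      have step : (E v)^2 - (E b₂)^2 = h * (E v/f₂ v - E b₂/f₂ b₂) := by
        rw [hhdef, div_mul_eq_mul_div, eq_div_iff hdq]
        linear_combination hc
      rw [hh0def]
      linear_combination step
    have hVq : ∀ v, (E v)^2 - f₂ v*K v = e * (E v/f₂ v) + τ' := by
      intro v
      have hc := (hdep v b₂ b₁ b₂).2.1
      have step : ((E v)^2 - f₂ v*K v) - ((E b₂)^2 - f₂ b₂*K b₂)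
          = e * (E v/f₂ v - E b₂/f₂ b₂) := by
        rw [hedef, div_mul_eq_mul_div, eq_div_iff hdq]
        linear_combination - hc
      rw [htdef]
      linear_combination step
    by_cases hh : h = 0
    · apply hψne 0 1 (by norm_num)
      rw [hψq 0, hψq 1, hh]
      ring
    · have hs3m : ∀ v, 2*E v*K v*(f₂ v)^2 = h*(K v * f₂ v - E v * E v) := by
        intro v
        have hfun : (fun v => (E v)^2) = (fun v => h * (E v/f₂ v) + h₀) := funext hψq
        have d1 := (hψd v).deriv
        rw [hfun] at d1
        have d2 : deriv (fun v => h*(E v/f₂ v) + h₀) v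
            = h * ((K v * f₂ v - E v * E v)/(f₂ v)^2) := (((hQd v).const_mul h).add_const h₀).deriv
        rw [d2] at d1
        have hD := h₂0 v
        field_simp at d1
        linear_combination - d1
      have hS4 : ∀ v, 2*(E v)^2*((E v)^2 - ((E v)^2 - f₂ v*K v))
          + h*((E v)^2 - f₂ v*K v)*(E v/f₂ v) = 0 := by
        intro v
        have hD := h₂0 v
        have h3 := hs3m v
        field_simp
        linear_combination (E v) * h3
      have hquad : ∀ v, (h*(2*h - e))*(E v/f₂ v)^2
          + (4*h*h₀ - h*τ' - 2*h₀*e)*(E v/f₂ v) + 2*h₀*(h₀ - τ') = 0 := by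
        intro v
        have h4 := hS4 v
        rw [hVq v, hψq v] at h4
        linear_combination h4
      -- three distinct values of q
      have hqcont : Continuous (fun v => E v / f₂ v) := by
        have hEdiff : Differentiable ℝ E := fun v => hf₂' v
        have hDdiff : Differentiable ℝ f₂ := fun v => hf₂ v
        exact hEdiff.continuous.div hDdiff.continuous h₂0
      obtain ⟨b₃, hb₃⟩ := exists_mid hqcont b₁ b₂
      have hx13 : E b₁/f₂ b₁ ≠ E b₃/f₂ b₃ := by
        rw [hb₃]; intro hcon; apply hbne; linarith
      have hx23 : E b₂/f₂ b₂ ≠ E b₃/f₂ b₃ := by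
        rw [hb₃]; intro hcon; apply hbne; linarith
      obtain ⟨hc2, hc1, hc0⟩ := quad_zero hbne hx13 hx23 (hquad b₁) (hquad b₂) (hquad b₃)
      have he2h : e = 2*h := by
        rcases mul_eq_zero.1 hc2 with h' | h'
        · exact absurd h' hh
        · linarith
      have hτ0 : τ' = 0 := by
        have hx : h * τ' = 0 := by linear_combination - hc1 - 2*h₀*he2h
        exact (mul_eq_zero.1 hx).resolve_left hh
      have hh0 : h₀ = 0 := by
        have hx : h₀ * h₀ = 0 := by linear_combination (1/2)*hc0 + h₀*hτ0
        exact mul_self_eq_zero.1 hx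
      have hED : ∀ v, f₂ v * E v = h := by
        intro v
        have h1 := hψq v
        rw [hh0] at h1
        have hD := h₂0 v
        field_simp at h1
        have h2 : (f₂ v * E v) * E v = h * E v := by linear_combination h1
        exact mul_right_cancel₀ (h₂'0 v) h2
      have hder : ∀ v, deriv (fun v => (f₂ v)^2) v = 2*h := by
        intro v
        rw [(hD2d v).deriv]
        linear_combination 2 * hED v
      obtain ⟨v₀, hv₀⟩ := exists_zero_of_deriv_const (mul_ne_zero two_ne_zero hh)
        (fun v => (hD2d v).differentiableAt) hder
      exact h₂0 v₀ (pow_eq_zero_iff (two_ne_zero) |>.1 hv₀)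
  · -- Branch 2 : two independent v-side difference vectors
    push_neg at hdep
    obtain ⟨v₁, v₂, v₃, v₄, hnd⟩ := hdep
    set x₁ : ℝ := ((E v₁)^2 - f₂ v₁*K v₁) - ((E v₂)^2 - f₂ v₂*K v₂) with hx₁def
    set y₁ : ℝ := (E v₁)^2 - (E v₂)^2 with hy₁def
    set z₁ : ℝ := E v₁/f₂ v₁ - E v₂/f₂ v₂ with hz₁def
    set x₂ : ℝ := ((E v₃)^2 - f₂ v₃*K v₃) - ((E v₄)^2 - f₂ v₄*K v₄) with hx₂def
    set y₂ : ℝ := (E v₃)^2 - (E v₄)^2 with hy₂def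
    set z₂ : ℝ := E v₃/f₂ v₃ - E v₄/f₂ v₄ with hz₂def
    clear_value x₁ y₁ z₁ x₂ y₂ z₂
    set κ₁ : ℝ := y₁*z₂ - z₁*y₂ with hκ₁def
    set κ₂ : ℝ := z₁*x₂ - x₁*z₂ with hκ₂def
    set κ₃ : ℝ := x₁*y₂ - y₁*x₂ with hκ₃def
    clear_value κ₁ κ₂ κ₃
    have hd1 : ∀ u, ((B u)^2 - (B 0)^2)*x₁
        + (((B u)^2 - f₁ u*C u) - ((B 0)^2 - f₁ 0*C 0))*y₁
        + (-(2*a)*(B u/f₁ u - B 0/f₁ 0))*z₁ = 0 := by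
      intro u
      rw [hx₁def, hy₁def, hz₁def]
      linear_combination hRR u 0 v₁ v₂
    have hd2 : ∀ u, ((B u)^2 - (B 0)^2)*x₂
        + (((B u)^2 - f₁ u*C u) - ((B 0)^2 - f₁ 0*C 0))*y₂
        + (-(2*a)*(B u/f₁ u - B 0/f₁ 0))*z₂ = 0 := by
      intro u
      rw [hx₂def, hy₂def, hz₂def]
      linear_combination hRR u 0 v₃ v₄
    have c3 : ∀ u, ((B u)^2 - (B 0)^2)*κ₂
        - (((B u)^2 - f₁ u*C u) - ((B 0)^2 - f₁ 0*C 0))*κ₁ = 0 := by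
      intro u
      rw [hκ₁def, hκ₂def]
      linear_combination z₁*(hd2 u) - z₂*(hd1 u)
    have c2 : ∀ u, (-(2*a)*(B u/f₁ u - B 0/f₁ 0))*κ₁
        - ((B u)^2 - (B 0)^2)*κ₃ = 0 := by
      intro u
      rw [hκ₁def, hκ₃def]
      linear_combination y₁*(hd2 u) - y₂*(hd1 u)
    have hφ10 : (B 1)^2 - (B 0)^2 ≠ 0 := sub_ne_zero.2 (hφne 1 0 (by norm_num))
    by_cases hκ : κ₁ = 0
    · have hκ2 : κ₂ = 0 := by
        have h' := c3 1
        rw [hκ] at h'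
        have h'' : ((B 1)^2 - (B 0)^2)*κ₂ = 0 := by linear_combination h'
        exact (mul_eq_zero.1 h'').resolve_left hφ10
      have hκ3 : κ₃ = 0 := by
        have h' := c2 1
        rw [hκ] at h'
        have h'' : ((B 1)^2 - (B 0)^2)*κ₃ = 0 := by linear_combination - h'
        exact (mul_eq_zero.1 h'').resolve_left hφ10
      exact (hnd (by linear_combination hκ - hκ₁def)
        (by linear_combination hκ2 - hκ₂def))
        (by linear_combination hκ3 - hκ₃def)
    · set σ : ℝ := κ₂/κ₁ with hσdef
      set τ : ℝ := ((B 0)^2 - f₁ 0*C 0) - σ*(B 0)^2 with hτdef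
      set c₁ : ℝ := -κ₃/(2*a*κ₁) with hc₁def
      set c₀ : ℝ := B 0/f₁ 0 - c₁*(B 0)^2 with hc₀def
      clear_value σ τ c₁ c₀
      have hUφ : ∀ u, (B u)^2 - f₁ u*C u = σ*(B u)^2 + τ := by
        intro u
        have step : ((B u)^2 - f₁ u*C u) - ((B 0)^2 - f₁ 0*C 0)
            = σ*((B u)^2 - (B 0)^2) := by
          rw [hσdef, div_mul_eq_mul_div, eq_div_iff hκ]
          linear_combination - c3 u
        rw [hτdef]
        linear_combination step
      have hpφ : ∀ u, B u/f₁ u = c₁*(B u)^2 + c₀ := by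
        intro u
        have h2aκ : 2*a*κ₁ ≠ 0 := mul_ne_zero (mul_ne_zero two_ne_zero ha) hκ
        have step : B u/f₁ u - B 0/f₁ 0 = c₁*((B u)^2 - (B 0)^2) := by
          rw [hc₁def, div_mul_eq_mul_div, eq_div_iff h2aκ]
          linear_combination - c2 u
        rw [hc₀def]
        linear_combination step
      by_cases hc1z : c₁ = 0
      · apply caseP
        intro u u'
        rw [hpφ u, hpφ u', hc1z]
        ring
      · have hr1m : ∀ u, B u = f₁ u*(c₁*(B u)^2 + c₀) := by
          intro u
          rw [← hpφ u]
          field_simp [h₁0 u]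
        have hr3m : ∀ u, C u*f₁ u - B u*B u = 2*c₁*(f₁ u)^2*(B u*C u) := by
          intro u
          have hfun : (fun u => B u/f₁ u) = (fun u => c₁*(B u)^2 + c₀) := funext hpφ
          have d1 := (hPd u).deriv
          rw [hfun] at d1
          have d2 : deriv (fun u => c₁*(B u)^2 + c₀) u = c₁*(2*B u*C u) :=
            (((hφd u).const_mul c₁).add_const c₀).deriv
          rw [d2] at d1
          rw [eq_div_iff (pow_ne_zero 2 (h₁0 u))] at d1
          linear_combination - d1
        have hquadu : ∀ u, (c₁*(2 - σ))*((B u)^2)^2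
            + (σ*c₀ - c₁*τ)*((B u)^2) + τ*c₀ = 0 := by
          intro u
          linear_combination (2*c₁*f₁ u*B u*C u) * (hr1m u)
            + (c₁*(B u)^2 - c₀) * (hUφ u) - (c₁*(B u)^2 + c₀) * (hr3m u)
        have hB01 : (B 0)^2 ≠ (B 1)^2 := hφne 0 1 (by norm_num)
        have hB02 : (B 0)^2 ≠ (B 2)^2 := hφne 0 2 (by norm_num)
        have hB12 : (B 1)^2 ≠ (B 2)^2 := hφne 1 2 (by norm_num)
        obtain ⟨hc2', hc1', hc0'⟩ := quad_zero hB01 hB02 hB12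
          (hquadu 0) (hquadu 1) (hquadu 2)
        have hσ2 : σ = 2 := by
          rcases mul_eq_zero.1 hc2' with h' | h'
          · exact absurd h' hc1z
          · linarith
        have hτc : τ = 0 ∧ c₀ = 0 := by
          rcases mul_eq_zero.1 hc0' with h' | h'
          · refine ⟨h', ?_⟩
            have h2 : 2*c₀ = 0 := by linear_combination hc1' + c₁*h' - c₀*hσ2
            linarith
          · refine ⟨?_, h'⟩
            have h2 : c₁*τ = 0 := by linear_combination - hc1' + σ*h'
            exact (mul_eq_zero.1 h2).resolve_left hc1z
        have hAB : ∀ u, f₁ u*B u*c₁ = 1 := by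
          intro u
          have h5 := hr1m u
          rw [hτc.2] at h5
          have h6 : B u * 1 = B u * (c₁*(f₁ u*B u)) := by linear_combination h5
          have h7 := mul_left_cancel₀ (h₁'0 u) h6
          linear_combination - h7
        have hder : ∀ u, deriv (fun u => (f₁ u)^2) u = 2/c₁ := by
          intro u
          rw [(hA2d u).deriv, eq_div_iff hc1z]
          linear_combination 2*(hAB u)
        obtain ⟨u₀, hu₀⟩ := exists_zero_of_deriv_const (div_ne_zero two_ne_zero hc1z)
          (fun u => (hA2d u).differentiableAt) hder
        exact h₁0 u₀ (pow_eq_zero_iff (two_ne_zero) |>.1 hu₀)
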